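/- Let G = (V, E) be a finite strongly connected directed graph with at least two vertices, let α ∈ [0, 1), and let φ : V → ℝ be a positive left eigenvector of the probability matrix M_α with φ M_α = φ. Then for every function f : V → ℝ and every vertex v_i ∈ V, ΔΓ(f, f)(v_i) = (1/(8φ(v_i))) [ Σ_{v_j ∈ N^out(v_i)} (w_{ij}/φ(v_j)) (W^in(v_j) + W^out(v_j)) + Σ_{v_k ∈ N^in(v_i)} (w_{ki}/φ(v_k)) (W^in(v_k) + W^out(v_k)) ], where for a vertex u, W^out(u) = Σ_{v_a ∈ N^out(u)} w_{ua} [ (f(v_a) − f(u))² − (f(u) − f(v_i))² ] and W^in(u) = Σ_{v_b ∈ N^in(u)} w_{bu} [ (f(v_b) − f(u))² − (f(u) − f(v_i))² ]. -/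

import Mathlib

open Finset

noncomputable section

/-- Out-neighborhood `S^out(x) = {y | (x,y) ∈ E}`. -/
def Sout {V : Type*} [Fintype V] (E : V → V → Prop) [DecidableRel E] (x : V) : Finset V :=
  Finset.univ.filter (fun y => E x y)

/-- In-neighborhood `S^in(x) = {z | (z,x) ∈ E}`. -/
def Sin {V : Type*} [Fintype V] (E : V → V → Prop) [DecidableRel E] (x : V) : Finset V :=
  Finset.univ.filter (fun z => E z x)

/-- `N^out(x) = {x} ∪ S^out(x)`. -/
def Nout {V : Type*} [Fintype V] [DecidableEq V] (E : V → V → Prop) [DecidableRel E]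
    (x : V) : Finset V :=
  insert x (Sout E x)

/-- `N^in(x) = {x} ∪ S^in(x)`. -/
def Nin {V : Type*} [Fintype V] [DecidableEq V] (E : V → V → Prop) [DecidableRel E]
    (x : V) : Finset V :=
  insert x (Sin E x)

/-- Degree `d_x = |S^out(x)|`. -/
def deg {V : Type*} [Fintype V] (E : V → V → Prop) [DecidableRel E] (x : V) : ℕ :=
  (Sout E x).card

/-- The probability matrix `M_α`. -/
def Mat {V : Type*} [Fintype V] [DecidableEq V] (E : V → V → Prop) [DecidableRel E]
    (α : ℝ) (x y : V) : ℝ :=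
  if y = x then α else if E x y then (1 - α) / (deg E x : ℝ) else 0

/-- The weights `w_{ij} = φ(v_i) (M_α)_{i,j}`. -/
def wt {V : Type*} [Fintype V] [DecidableEq V] (E : V → V → Prop) [DecidableRel E]
    (α : ℝ) (φ : V → ℝ) (x y : V) : ℝ :=
  φ x * Mat E α x y

/-- The Laplacian on directed graphs. -/
def lap {V : Type*} [Fintype V] [DecidableEq V] (E : V → V → Prop) [DecidableRel E]
    (α : ℝ) (φ : V → ℝ) (f : V → ℝ) (x : V) : ℝ :=
  (1 / (2 * φ x)) *
    ((∑ y ∈ Sout E x, wt E α φ x y * (f y - f x)) +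
     (∑ z ∈ Sin E x, wt E α φ z x * (f z - f x)))

/-- `Γ(f,g) = (1/2)(Δ(fg) - fΔg - gΔf)`. -/
def Gam {V : Type*} [Fintype V] [DecidableEq V] (E : V → V → Prop) [DecidableRel E]
    (α : ℝ) (φ : V → ℝ) (f g : V → ℝ) (x : V) : ℝ :=
  (1 / 2) * (lap E α φ (f * g) x - f x * lap E α φ g x - g x * lap E α φ f x)

/-- `Γ₂(f,g) = (1/2)(ΔΓ(f,g) - Γ(f,Δg) - Γ(Δf,g))`. -/
def Gam2 {V : Type*} [Fintype V] [DecidableEq V] (E : V → V → Prop) [DecidableRel E]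
    (α : ℝ) (φ : V → ℝ) (f g : V → ℝ) (x : V) : ℝ :=
  (1 / 2) * (lap E α φ (Gam E α φ f g) x - Gam E α φ f (lap E α φ g) x -
    Gam E α φ (lap E α φ f) g x)

/-- `C(v_i)`: the minimum of `w_{ij}/φ(v_j)` over `v_j ∈ S^out(v_i)` and
`w_{ki}/φ(v_k)` over `v_k ∈ S^in(v_i)`. -/
def Cmin {V : Type*} [Fintype V] [DecidableEq V] (E : V → V → Prop) [DecidableRel E]
    (α : ℝ) (φ : V → ℝ) (x : V) : ℝ :=
  sInf ((fun j => wt E α φ x j / φ j) '' (Sout E x : Set V) ∪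
        (fun k => wt E α φ k x / φ k) '' (Sin E x : Set V))

/-- `W^out(u)` relative to the base vertex `vi`. -/
def Wout {V : Type*} [Fintype V] [DecidableEq V] (E : V → V → Prop) [DecidableRel E]
    (α : ℝ) (φ : V → ℝ) (f : V → ℝ) (vi u : V) : ℝ :=
  ∑ va ∈ Nout E u, wt E α φ u va * ((f va - f u) ^ 2 - (f u - f vi) ^ 2)

/-- `W^in(u)` relative to the base vertex `vi`. -/
def Win {V : Type*} [Fintype V] [DecidableEq V] (E : V → V → Prop) [DecidableRel E]
    (α : ℝ) (φ : V → ℝ) (f : V → ℝ) (vi u : V) : ℝ :=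
  ∑ vb ∈ Nin E u, wt E α φ vb u * ((f vb - f u) ^ 2 - (f u - f vi) ^ 2)


set_option linter.unusedSectionVars false
set_option linter.unusedVariables false

section Aux

variable {V : Type*} [Fintype V] [DecidableEq V] (E : V → V → Prop) [DecidableRel E]
  (α : ℝ) (φ : V → ℝ)

lemma mem_Sout' {x y : V} : y ∈ Sout E x ↔ E x y := by simp [Sout]

lemma mem_Nout' {x y : V} : y ∈ Nout E x ↔ y = x ∨ E x y := by simp [Nout, Sout]

lemma mem_Nin' {x y : V} : y ∈ Nin E x ↔ y = x ∨ E y x := by simp [Nin, Sin]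

lemma sum_insert_zero' {s : Finset V} {a : V} {f : V → ℝ} (h : f a = 0) :
    ∑ x ∈ insert a s, f x = ∑ x ∈ s, f x :=
  Finset.sum_insert_of_eq_zero_if_notMem (fun _ => h)

lemma wt_eq_zero {x y : V} (h : y ∉ Nout E x) : wt E α φ x y = 0 := by
  rw [mem_Nout'] at h
  push_neg at h
  simp [wt, Mat, h.1, h.2]

lemma Ain_eq (heig : ∀ y : V, ∑ x : V, φ x * Mat E α x y = φ y) (u : V) :
    ∑ b ∈ Nin E u, wt E α φ b u = φ u := by
  rw [← heig u]
  refine Finset.sum_subset (Finset.subset_univ _) ?_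
  intro x _ hx
  have hx' : u ∉ Nout E x := by
    rw [mem_Nout']
    rw [mem_Nin'] at hx
    push_neg at hx ⊢
    exact ⟨fun h => hx.1 h.symm, hx.2⟩
  simpa [wt] using wt_eq_zero E α φ hx'

lemma Sout_nonempty (hcard : 1 < Fintype.card V)
    (hconn : ∀ x y : V, x ≠ y → Relation.TransGen E x y) (u : V) :
    (Sout E u).Nonempty := by
  obtain ⟨y, hy⟩ := Fintype.exists_ne_of_one_lt_card hcard u
  obtain ⟨z, hz, -⟩ := (Relation.TransGen.head'_iff).mp (hconn u y hy.symm)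
  exact ⟨z, (mem_Sout' E).mpr hz⟩

lemma Aout_le (hcard : 1 < Fintype.card V)
    (hconn : ∀ x y : V, x ≠ y → Relation.TransGen E x y)
    (hα0 : 0 ≤ α) (hα1 : α < 1) (hφ : ∀ v : V, 0 < φ v) (u : V) :
    ∑ a ∈ Nout E u, wt E α φ u a ≤ φ u := by
  have hd : 0 < deg E u := Finset.card_pos.mpr (Sout_nonempty E hcard hconn u)
  have hne : u ∉ (Sout E u).erase u := Finset.notMem_erase _ _
  have hins : Nout E u = insert u ((Sout E u).erase u) := by
    ext x
    simp only [mem_Nout', Finset.mem_insert, Finset.mem_erase, mem_Sout']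
    by_cases hx : x = u <;> simp [hx]
  rw [hins, Finset.sum_insert hne]
  have h1 : wt E α φ u u = φ u * α := by simp [wt, Mat]
  have h2 : ∀ a ∈ (Sout E u).erase u, wt E α φ u a = φ u * ((1 - α) / (deg E u : ℝ)) := by
    intro a ha
    obtain ⟨hne', hmem⟩ := Finset.mem_erase.mp ha
    simp [wt, Mat, hne', (mem_Sout' E).mp hmem]
  rw [h1, Finset.sum_congr rfl h2, Finset.sum_const, nsmul_eq_mul]
  have hcle : (((Sout E u).erase u).card : ℝ) ≤ (deg E u : ℝ) := by
    exact_mod_cast Finset.card_le_card (Finset.erase_subset _ _)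
  have ht : (0:ℝ) ≤ φ u * ((1 - α) / (deg E u : ℝ)) := by
    have := (hφ u).le
    have h1α : (0:ℝ) ≤ 1 - α := by linarith
    positivity
  have e : φ u * α + (deg E u : ℝ) * (φ u * ((1 - α) / (deg E u : ℝ))) = φ u := by
    have hd' : (deg E u : ℝ) ≠ 0 := by positivity
    field_simp
    ring
  calc φ u * α + (((Sout E u).erase u).card : ℝ) * (φ u * ((1 - α) / (deg E u : ℝ)))
      ≤ φ u * α + (deg E u : ℝ) * (φ u * ((1 - α) / (deg E u : ℝ))) := by
        exact add_le_add le_rfl (mul_le_mul_of_nonneg_right hcle ht)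
    _ = φ u := e

lemma Aout_eq (hcard : 1 < Fintype.card V)
    (hconn : ∀ x y : V, x ≠ y → Relation.TransGen E x y)
    (hα0 : 0 ≤ α) (hα1 : α < 1) (hφ : ∀ v : V, 0 < φ v)
    (heig : ∀ y : V, ∑ x : V, φ x * Mat E α x y = φ y) (u : V) :
    ∑ a ∈ Nout E u, wt E α φ u a = φ u := by
  have hdouble : ∑ v : V, ∑ a ∈ Nout E v, wt E α φ v a = ∑ v : V, φ v := by
    have e1 : ∀ v : V, ∑ a ∈ Nout E v, wt E α φ v a = ∑ a : V, wt E α φ v a := by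
      intro v
      exact Finset.sum_subset (Finset.subset_univ _) (fun a _ ha => wt_eq_zero E α φ ha)
    have e2 : ∀ a : V, ∑ v : V, wt E α φ v a = φ a := by
      intro a
      simp only [wt]
      exact heig a
    simp_rw [e1]
    rw [Finset.sum_comm]
    simp_rw [e2]
  by_contra hne
  have hlt : ∑ v : V, ∑ a ∈ Nout E v, wt E α φ v a < ∑ v : V, φ v :=
    Finset.sum_lt_sum (fun i _ => Aout_le E α φ hcard hconn hα0 hα1 hφ i)
      ⟨u, Finset.mem_univ u, lt_of_le_of_ne (Aout_le E α φ hcard hconn hα0 hα1 hφ u) hne⟩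
  exact absurd hdouble hlt.ne

lemma gam_eq (hφ : ∀ v : V, 0 < φ v) (f : V → ℝ) (u : V) :
    Gam E α φ f f u = (1 / (4 * φ u)) *
      ((∑ a ∈ Nout E u, wt E α φ u a * (f a - f u) ^ 2) +
       (∑ b ∈ Nin E u, wt E α φ b u * (f b - f u) ^ 2)) := by
  have e1 : (∑ a ∈ Nout E u, wt E α φ u a * (f a - f u) ^ 2)
      = ∑ a ∈ Sout E u, wt E α φ u a * (f a - f u) ^ 2 :=
    sum_insert_zero' (by simp)
  have e2 : (∑ b ∈ Nin E u, wt E α φ b u * (f b - f u) ^ 2)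
      = ∑ b ∈ Sin E u, wt E α φ b u * (f b - f u) ^ 2 :=
    sum_insert_zero' (by simp)
  rw [e1, e2]
  simp only [Gam, lap, Pi.mul_apply]
  have key : ∀ (s : Finset V) (w : V → ℝ),
      ∑ a ∈ s, w a * (f a - f u) ^ 2
        = (∑ a ∈ s, w a * (f a * f a - f u * f u)) - 2 * f u * ∑ a ∈ s, w a * (f a - f u) := by
    intro s w
    rw [Finset.mul_sum, ← Finset.sum_sub_distrib]
    exact Finset.sum_congr rfl fun a _ => by ring
  rw [key (Sout E u) (fun a => wt E α φ u a), key (Sin E u) (fun b => wt E α φ b u)]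
  have hp : φ u ≠ 0 := (hφ u).ne'
  field_simp
  ring

lemma winout_eq (hφ : ∀ v : V, 0 < φ v)
    (hAin : ∀ u : V, ∑ b ∈ Nin E u, wt E α φ b u = φ u)
    (hAout : ∀ u : V, ∑ a ∈ Nout E u, wt E α φ u a = φ u)
    (f : V → ℝ) (vi u : V) :
    Win E α φ f vi u + Wout E α φ f vi u
      = 4 * φ u * Gam E α φ f f u - 2 * φ u * (f u - f vi) ^ 2 := by
  have h1 : Win E α φ f vi u
      = (∑ vb ∈ Nin E u, wt E α φ vb u * (f vb - f u) ^ 2) - φ u * (f u - f vi) ^ 2 := by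
    rw [Win, ← hAin u, Finset.sum_mul, ← Finset.sum_sub_distrib]
    exact Finset.sum_congr rfl fun b _ => by ring
  have h2 : Wout E α φ f vi u
      = (∑ va ∈ Nout E u, wt E α φ u va * (f va - f u) ^ 2) - φ u * (f u - f vi) ^ 2 := by
    rw [Wout, ← hAout u, Finset.sum_mul, ← Finset.sum_sub_distrib]
    exact Finset.sum_congr rfl fun a _ => by ring
  rw [h1, h2, gam_eq E α φ hφ f u]
  have hp : φ u ≠ 0 := (hφ u).ne'
  field_simp
  ring

end Aux

theorem lap_gamma_formula {V : Type*} [Fintype V] [DecidableEq V] (E : V → V → Prop) [DecidableRel E]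
    (α : ℝ) (φ : V → ℝ)
    (hcard : 1 < Fintype.card V)
    (hconn : ∀ x y : V, x ≠ y → Relation.TransGen E x y)
    (hα0 : 0 ≤ α) (hα1 : α < 1)
    (hφ : ∀ v : V, 0 < φ v)
    (heig : ∀ y : V, ∑ x : V, φ x * Mat E α x y = φ y) :
    ∀ (f : V → ℝ) (vi : V),
      lap E α φ (Gam E α φ f f) vi =
        (1 / (8 * φ vi)) *
          ((∑ vj ∈ Nout E vi, (wt E α φ vi vj / φ vj) *
              (Win E α φ f vi vj + Wout E α φ f vi vj)) +
           (∑ vk ∈ Nin E vi, (wt E α φ vk vi / φ vk) *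
              (Win E α φ f vi vk + Wout E α φ f vi vk))) := by
  intro f vi
  have hp : φ vi ≠ 0 := (hφ vi).ne'
  have hAin : ∀ u : V, ∑ b ∈ Nin E u, wt E α φ b u = φ u := Ain_eq E α φ heig
  have hAout : ∀ u : V, ∑ a ∈ Nout E u, wt E α φ u a = φ u :=
    Aout_eq E α φ hcard hconn hα0 hα1 hφ heig
  have hW := winout_eq E α φ hφ hAin hAout f vi
  have hR1 : ∑ vj ∈ Nout E vi, (wt E α φ vi vj / φ vj) *
        (Win E α φ f vi vj + Wout E α φ f vi vj)
      = (4 * ∑ vj ∈ Nout E vi, wt E α φ vi vj * Gam E α φ f f vj)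
        - 2 * ∑ vj ∈ Nout E vi, wt E α φ vi vj * (f vj - f vi) ^ 2 := by
    rw [Finset.mul_sum, Finset.mul_sum, ← Finset.sum_sub_distrib]
    refine Finset.sum_congr rfl fun j _ => ?_
    rw [hW j]
    have hpj : φ j ≠ 0 := (hφ j).ne'
    field_simp
  have hR2 : ∑ vk ∈ Nin E vi, (wt E α φ vk vi / φ vk) *
        (Win E α φ f vi vk + Wout E α φ f vi vk)
      = (4 * ∑ vk ∈ Nin E vi, wt E α φ vk vi * Gam E α φ f f vk)
        - 2 * ∑ vk ∈ Nin E vi, wt E α φ vk vi * (f vk - f vi) ^ 2 := by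
    rw [Finset.mul_sum, Finset.mul_sum, ← Finset.sum_sub_distrib]
    refine Finset.sum_congr rfl fun k _ => ?_
    rw [hW k]
    have hpk : φ k ≠ 0 := (hφ k).ne'
    field_simp
  have eL1 : (∑ vj ∈ Nout E vi, wt E α φ vi vj * (Gam E α φ f f vj - Gam E α φ f f vi))
      = ∑ vj ∈ Sout E vi, wt E α φ vi vj * (Gam E α φ f f vj - Gam E α φ f f vi) :=
    sum_insert_zero' (by simp)
  have eL2 : (∑ vk ∈ Nin E vi, wt E α φ vk vi * (Gam E α φ f f vk - Gam E α φ f f vi))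
      = ∑ vk ∈ Sin E vi, wt E α φ vk vi * (Gam E α φ f f vk - Gam E α φ f f vi) :=
    sum_insert_zero' (by simp)
  have eD1 : (∑ vj ∈ Nout E vi, wt E α φ vi vj * (Gam E α φ f f vj - Gam E α φ f f vi))
      = (∑ vj ∈ Nout E vi, wt E α φ vi vj * Gam E α φ f f vj) - φ vi * Gam E α φ f f vi := by
    rw [← hAout vi, Finset.sum_mul, ← Finset.sum_sub_distrib]
    exact Finset.sum_congr rfl fun j _ => by ring
  have eD2 : (∑ vk ∈ Nin E vi, wt E α φ vk vi * (Gam E α φ f f vk - Gam E α φ f f vi))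
      = (∑ vk ∈ Nin E vi, wt E α φ vk vi * Gam E α φ f f vk) - φ vi * Gam E α φ f f vi := by
    rw [← hAin vi, Finset.sum_mul, ← Finset.sum_sub_distrib]
    exact Finset.sum_congr rfl fun k _ => by ring
  rw [hR1, hR2]
  simp only [lap]
  rw [← eL1, ← eL2, eD1, eD2, gam_eq E α φ hφ f vi]
  field_simp
  ring
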